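/- arXiv:2004.02171 — 2 statements merged into one kernel-verified Lean document; each statement's English description precedes it below -/
import Mathlib

section
/- Let $r$ have density $f_r(r) = \frac{2r}{D_1^2-D_0^2}$ on $[D_0,D_1]$ and let $\xi \sim \mathrm{Exp}(1)$ be independent of $r$. Then for $P, \upsilon > 0$ and $\alpha > 0$, the probability $\mathcal{P}_0 = \Pr\{P \xi r^{-\alpha} > \upsilon^2\}$ equals $\frac{2 (P/\upsilon^2)^{2/\alpha}}{\alpha (D_1^2 - D_0^2)}\left[\Gamma\left(\frac{2}{\alpha}, \frac{\upsilon^2 D_0^{\alpha}}{P}\right) - \Gamma\left(\frac{2}{\alpha}, \frac{\upsilon^2 D_1^{\alpha}}{P}\right)\right]$. -/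
open Real MeasureTheory ProbabilityTheory

/-- The upper incomplete Gamma function `Γ(a, x) = ∫_x^∞ t^(a-1) e^(-t) dt`. -/
noncomputable def upperGamma (a x : ℝ) : ℝ := ∫ t in Set.Ioi x, t ^ (a - 1) * Real.exp (-t)

/-- The law of the distance `r`, with density `2r/(D₁²-D₀²)` on `[D₀, D₁]`. -/
noncomputable def distLaw (D0 D1 : ℝ) : Measure ℝ :=
  volume.withDensity fun t =>
    ENNReal.ofReal ((Set.Icc D0 D1).indicator (fun s => 2 * s / (D1 ^ 2 - D0 ^ 2)) t)

lemma expMeasure_Ioi {c : ℝ} (hc : 0 ≤ c) :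
    expMeasure 1 (Set.Ioi c) = ENNReal.ofReal (Real.exp (-c)) := by
  have hpm : IsProbabilityMeasure (expMeasure 1) := isProbabilityMeasure_expMeasure one_pos
  have hIic : expMeasure 1 (Set.Iic c) = ENNReal.ofReal (1 - Real.exp (-c)) := by
    rw [expMeasure, gammaMeasure, withDensity_apply _ measurableSet_Iic]
    have := lintegral_exponentialPDF_eq_antiDeriv (r := 1) one_pos c
    rw [show gammaPDF 1 1 = exponentialPDF 1 from rfl, this, if_pos hc, one_mul]
  have := measure_compl (μ := expMeasure 1) (measurableSet_Iic (a := c)) (measure_ne_top _ _)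
  rw [Set.compl_Iic] at this
  rw [this, hIic, measure_univ, ← ENNReal.ofReal_one, ← ENNReal.ofReal_sub _ (by
    have : Real.exp (-c) ≤ 1 := Real.exp_le_one_iff.mpr (by linarith)
    linarith)]
  ring_nf

lemma subst_lemma {c α D0 D1 : ℝ} (hc : 0 < c) (hα : 0 < α) (hD0 : 0 < D0) (hD : D0 ≤ D1) :
    ∫ x in D0..D1, x * Real.exp (-(c * x ^ α)) =
      (α * c ^ (2/α))⁻¹ * ∫ t in (c * D0 ^ α)..(c * D1 ^ α), t ^ (2/α - 1) * Real.exp (-t) := by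
  have huIcc : Set.uIcc D0 D1 = Set.Icc D0 D1 := Set.uIcc_of_le hD
  set f : ℝ → ℝ := fun x => c * x ^ α with hf
  set f' : ℝ → ℝ := fun x => c * (α * x ^ (α - 1)) with hf'
  set g : ℝ → ℝ := fun t => t ^ (2/α - 1) * Real.exp (-t) with hg
  have hderiv : ∀ x ∈ Set.uIcc D0 D1, HasDerivAt f (f' x) x := by
    intro x hx
    rw [huIcc] at hx
    exact (Real.hasDerivAt_rpow_const (Or.inl (by linarith [hx.1]))).const_mul c
  have hcont' : ContinuousOn f' (Set.uIcc D0 D1) := by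
    intro x hx
    rw [huIcc] at hx
    have h1 : ContinuousAt (fun k : ℝ => k ^ (α-1)) x :=
      Real.continuousAt_rpow_const x (α-1) (Or.inl (by linarith [hx.1]))
    have h2 : ContinuousAt f' x := by
      simp only [hf']
      fun_prop
    exact h2.continuousWithinAt
  have hgcont : ContinuousOn g (f '' Set.uIcc D0 D1) := by
    apply ContinuousOn.mono (s := Set.Ioi (0:ℝ))
    · intro t ht
      exact (((Real.continuousAt_rpow_const t _ (Or.inl (ne_of_gt ht))).mul
        (Real.continuous_exp.continuousAt.comp (continuous_neg.continuousAt)))).continuousWithinAt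
    · rintro _ ⟨x, hx, rfl⟩
      rw [huIcc] at hx
      exact mul_pos hc (Real.rpow_pos_of_pos (by linarith [hx.1]) α)
  have key := intervalIntegral.integral_comp_smul_deriv' hderiv hcont' hgcont
  have hεq : ∀ x ∈ Set.uIcc D0 D1, f' x • (g ∘ f) x =
      (α * c ^ (2/α)) * (x * Real.exp (-(c * x ^ α))) := by
    intro x hx
    rw [huIcc] at hx
    have hx0 : (0:ℝ) < x := by linarith [hx.1]
    have h1 : (c * x ^ α) ^ (2/α - 1) = c ^ (2/α - 1) * x ^ (2 - α) := by
      rw [Real.mul_rpow hc.le (Real.rpow_pos_of_pos hx0 α).le, ← Real.rpow_mul hx0.le]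
      congr 1
      field_simp
    simp only [smul_eq_mul, Function.comp, hf, hf', hg, h1]
    have h2 : c * c ^ (2/α - 1) = c ^ (2/α) := by
      nth_rewrite 1 [← Real.rpow_one c]
      rw [← Real.rpow_add hc]; norm_num
    have h3 : x ^ (α - 1) * x ^ (2 - α) = x := by
      rw [← Real.rpow_add hx0]; norm_num
    calc c * (α * x ^ (α-1)) * (c ^ (2/α-1) * x ^ (2-α) * Real.exp (-(c * x ^ α)))
        = α * (c * c ^ (2/α-1)) * (x ^ (α-1) * x ^ (2-α)) * Real.exp (-(c * x ^ α)) := by ring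
      _ = _ := by rw [h2, h3]; ring
  rw [intervalIntegral.integral_congr hεq, intervalIntegral.integral_const_mul] at key
  have hne : (α * c ^ (2/α)) ≠ 0 := by positivity
  field_simp at key ⊢
  linarith [key]

lemma gamma_diff {a x0 x1 : ℝ} (ha : 0 < a) (h0 : 0 < x0) (h01 : x0 ≤ x1) :
    upperGamma a x0 - upperGamma a x1 = ∫ t in x0..x1, t ^ (a - 1) * Real.exp (-t) := by
  have hint : IntegrableOn (fun t : ℝ => t ^ (a - 1) * Real.exp (-t)) (Set.Ioi 0) := by
    have := Real.GammaIntegral_convergent ha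
    exact this.congr_fun (fun t ht => mul_comm _ _) measurableSet_Ioi
  have hsub0 : Set.Ioi x0 ⊆ Set.Ioi (0:ℝ) := Set.Ioi_subset_Ioi h0.le
  have hsub1 : Set.Ioi x1 ⊆ Set.Ioi (0:ℝ) := Set.Ioi_subset_Ioi (by linarith)
  have hunion : Set.Ioc x0 x1 ∪ Set.Ioi x1 = Set.Ioi x0 := Set.Ioc_union_Ioi_eq_Ioi h01
  have hdisj : Disjoint (Set.Ioc x0 x1) (Set.Ioi x1) := by
    simp [Set.disjoint_left]
  have := setIntegral_union hdisj measurableSet_Ioi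
    ((hint.mono_set (Set.Ioc_subset_Ioi_self.trans hsub0)))
    (hint.mono_set hsub1) (f := fun t : ℝ => t ^ (a - 1) * Real.exp (-t)) (μ := volume)
  rw [hunion] at this
  rw [upperGamma, upperGamma, this, intervalIntegral.integral_of_le h01,
    MeasureTheory.integral_Ioc_eq_integral_Ioo, ← MeasureTheory.integral_Ioc_eq_integral_Ioo]
  ring

/-- If `r` has density `2r/(D₁²-D₀²)` on `[D₀,D₁]` and `ξ ~ Exp(1)` is independent of `r`,
then `𝒫₀ = Pr{P ξ r^{-α} > υ²}` equals
`(2 (P/υ²)^{2/α} / (α (D₁² - D₀²))) [Γ(2/α, υ²D₀^α/P) - Γ(2/α, υ²D₁^α/P)]`. -/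
theorem prob_received_power_gt_threshold
    {Ω : Type*} [MeasurableSpace Ω] (μ : Measure Ω) [IsProbabilityMeasure μ]
    (r ξ : Ω → ℝ) (hr : Measurable r) (hξ : Measurable ξ)
    (P υ α D0 D1 : ℝ) (hP : 0 < P) (hυ : 0 < υ) (hα : 0 < α) (hD0 : 0 < D0) (hD : D0 < D1)
    (hlaw : Measure.map (fun ω => (r ω, ξ ω)) μ =
      (distLaw D0 D1).prod (expMeasure 1)) :
    μ {ω | P * ξ ω * (r ω) ^ (-α) > υ ^ 2} =
      ENNReal.ofReal
        (2 * (P / υ ^ 2) ^ (2 / α) / (α * (D1 ^ 2 - D0 ^ 2)) *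
          (upperGamma (2 / α) (υ ^ 2 * D0 ^ α / P) -
            upperGamma (2 / α) (υ ^ 2 * D1 ^ α / P))) := by
  set K : ℝ := D1 ^ 2 - D0 ^ 2 with hK
  have hKpos : 0 < K := by
    have := sq_lt_sq' (by linarith : -D1 < D0) hD
    simp only [hK]; nlinarith
  set c : ℝ := υ ^ 2 / P with hc
  have hcpos : 0 < c := by positivity
  set S : Set (ℝ × ℝ) := {p : ℝ × ℝ | υ ^ 2 < P * p.2 * p.1 ^ (-α)} with hS
  have hSm : MeasurableSet S := by
    apply measurableSet_lt measurable_const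
    exact (measurable_const.mul measurable_snd).mul (measurable_fst.pow_const (-α))
  have step1 : μ {ω | P * ξ ω * (r ω) ^ (-α) > υ ^ 2} =
      ((distLaw D0 D1).prod (expMeasure 1)) S := by
    rw [← hlaw, Measure.map_apply (hr.prodMk hξ) hSm]
    rfl
  haveI : IsProbabilityMeasure (expMeasure 1) := isProbabilityMeasure_expMeasure one_pos
  rw [step1, Measure.prod_apply hSm]
  -- unfold distLaw
  have hdm : Measurable fun t : ℝ =>
      ENNReal.ofReal ((Set.Icc D0 D1).indicator (fun s => 2 * s / K) t) := by
    apply Measurable.ennreal_ofReal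
    exact Measurable.indicator (by fun_prop) measurableSet_Icc
  have hslice : Measurable fun x : ℝ => expMeasure 1 (Prod.mk x ⁻¹' S) :=
    measurable_measure_prodMk_left hSm
  rw [distLaw, lintegral_withDensity_eq_lintegral_mul _ hdm hslice]
  -- rewrite integrand as indicator
  have hind : (fun x : ℝ =>
      (ENNReal.ofReal ((Set.Icc D0 D1).indicator (fun s => 2 * s / K) x)) *
        expMeasure 1 (Prod.mk x ⁻¹' S)) =
      fun x => (Set.Icc D0 D1).indicator
        (fun x => ENNReal.ofReal (2 * x / K * Real.exp (-(c * x ^ α)))) x := by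
    funext x
    by_cases hx : x ∈ Set.Icc D0 D1
    · have hx0 : 0 < x := lt_of_lt_of_le hD0 hx.1
      have hxc : 0 ≤ c * x ^ α := by positivity
      have hsliceEq : Prod.mk x ⁻¹' S = Set.Ioi (c * x ^ α) := by
        ext y
        simp only [hS, Set.mem_preimage, Set.mem_setOf_eq, Set.mem_Ioi]
        rw [Real.rpow_neg hx0.le]
        have hxa : 0 < x ^ α := Real.rpow_pos_of_pos hx0 α
        rw [show P * y * (x ^ α)⁻¹ = P * y / x ^ α by ring, lt_div_iff₀ hxa, hc]
        rw [div_mul_eq_mul_div, div_lt_iff₀ hP]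
        constructor <;> intro h <;> nlinarith
      rw [hsliceEq, expMeasure_Ioi hxc, Set.indicator_of_mem hx, Set.indicator_of_mem hx,
        ← ENNReal.ofReal_mul (by positivity)]
    · rw [Set.indicator_of_notMem hx, Set.indicator_of_notMem hx]
      simp
  simp only [Pi.mul_apply]
  rw [hind, lintegral_indicator measurableSet_Icc]
  -- convert to a real integral
  have hFcont : ContinuousOn (fun x : ℝ => 2 * x / K * Real.exp (-(c * x ^ α)))
      (Set.Icc D0 D1) := by
    apply ContinuousOn.mul (by fun_prop)
    apply Real.continuous_exp.comp_continuousOn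
    apply ContinuousOn.neg
    apply ContinuousOn.mul continuousOn_const
    intro x hx
    exact (Real.continuousAt_rpow_const x α (Or.inl (by linarith [hx.1]))).continuousWithinAt
  have hFint : IntegrableOn (fun x : ℝ => 2 * x / K * Real.exp (-(c * x ^ α)))
      (Set.Icc D0 D1) := hFcont.integrableOn_Icc
  have hFnn : 0 ≤ᵐ[volume.restrict (Set.Icc D0 D1)]
      fun x : ℝ => 2 * x / K * Real.exp (-(c * x ^ α)) := by
    filter_upwards [ae_restrict_mem measurableSet_Icc] with x hx
    have hx0 : 0 < x := lt_of_lt_of_le hD0 hx.1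
    positivity
  rw [← MeasureTheory.ofReal_integral_eq_lintegral_ofReal hFint hFnn]
  congr 1
  -- compute the real integral
  have hIccIoc : ∫ x in Set.Icc D0 D1, 2 * x / K * Real.exp (-(c * x ^ α)) =
      ∫ x in D0..D1, 2 * x / K * Real.exp (-(c * x ^ α)) := by
    rw [intervalIntegral.integral_of_le hD.le, MeasureTheory.integral_Icc_eq_integral_Ioc]
  rw [hIccIoc]
  have hpull : ∫ x in D0..D1, 2 * x / K * Real.exp (-(c * x ^ α)) =
      (2 / K) * ∫ x in D0..D1, x * Real.exp (-(c * x ^ α)) := by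
    rw [← intervalIntegral.integral_const_mul]
    apply intervalIntegral.integral_congr
    intro x hx
    ring
  rw [hpull, subst_lemma hcpos hα hD0 hD.le]
  have h2α : 0 < 2 / α := by positivity
  have hx0pos : 0 < c * D0 ^ α := by positivity
  have hx01 : c * D0 ^ α ≤ c * D1 ^ α := by
    apply mul_le_mul_of_nonneg_left _ hcpos.le
    exact Real.rpow_le_rpow hD0.le hD.le hα.le
  have hargs0 : υ ^ 2 * D0 ^ α / P = c * D0 ^ α := by rw [hc]; ring
  have hargs1 : υ ^ 2 * D1 ^ α / P = c * D1 ^ α := by rw [hc]; ring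
  rw [hargs0, hargs1, gamma_diff h2α hx0pos hx01]
  have hPυ : (P / υ ^ 2) ^ (2 / α) = (c ^ (2 / α))⁻¹ := by
    rw [hc, ← Real.inv_rpow (by positivity), inv_div]
  rw [hPυ]
  have hcne : c ^ (2/α) ≠ 0 := by positivity
  field_simp
  try exact Or.inl trivial
end

section
/- For a nonnegative random variable $X$, $\mathbb{E}[\ln(1+X)] = \int_0^{\infty} \frac{e^{-s}}{s}\left(1 - \mathbb{E}[e^{-sX}]\right) ds$. -/
open Real MeasureTheory
open Set

lemma aux_exp_int {t : ℝ} (ht : 0 < t) :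
    ∫ s in Set.Ioi (0:ℝ), Real.exp (-(s*t)) = 1/t := by
  have h := integral_comp_mul_right_Ioi (fun u => Real.exp (-u)) 0 ht
  simp only [zero_mul, smul_eq_mul] at h
  rw [h, integral_exp_neg_Ioi_zero, mul_one, one_div]

lemma aux_interval {s : ℝ} (hs : s ≠ 0) (a b : ℝ) :
    ∫ t in a..b, Real.exp (-(s*t)) =
      (Real.exp (-(s*a)) - Real.exp (-(s*b)))/s := by
  have hd : ∀ t : ℝ, HasDerivAt (fun t => Real.exp (-(s*t)) / (-s)) (Real.exp (-(s*t))) t := by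
    intro t
    have h1 : HasDerivAt (fun t : ℝ => -(s*t)) (-s) t := by
      simpa using ((hasDerivAt_id t).const_mul s).fun_neg
    have h2 := (Real.hasDerivAt_exp (-(s*t))).comp t h1
    have h3 := h2.div_const (-s)
    simpa [mul_div_assoc, div_self hs] using h3
  rw [intervalIntegral.integral_eq_sub_of_hasDerivAt (fun t _ => hd t)
    ((Real.continuous_exp.comp (by continuity)).intervalIntegrable a b)]
  ring

lemma aux_frullani {x : ℝ} (hx : 0 ≤ x) :
    ∫ s in Set.Ioi (0:ℝ), Real.exp (-s) / s * (1 - Real.exp (-(s*x)))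
      = Real.log (1+x) := by
  have hx1 : (1:ℝ) ≤ 1 + x := by linarith
  have h_closed : ∀ s ∈ Ioi (0:ℝ),
      Real.exp (-s) / s * (1 - Real.exp (-(s*x)))
        = ∫ t in Set.Ioc (1:ℝ) (1+x), Real.exp (-(s*t)) := by
    intro s hs
    rw [← intervalIntegral.integral_of_le hx1, aux_interval (ne_of_gt hs)]
    have he : Real.exp (-s) * Real.exp (-(s*x)) = Real.exp (-(s*(1+x))) := by
      rw [← Real.exp_add]; ring_nf
    rw [mul_one] at *
    field_simp
    rw [← he]; ring
  have hmeas : Measurable (fun s : ℝ => Real.exp (-s) / s * (1 - Real.exp (-(s*x)))) := by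
    fun_prop
  have hnn : ∀ s ∈ Ioi (0:ℝ), 0 ≤ Real.exp (-s) / s * (1 - Real.exp (-(s*x))) := by
    intro s hs
    have hs' : (0:ℝ) < s := hs
    have h2 : Real.exp (-(s*x)) ≤ 1 :=
      Real.exp_le_one_iff.mpr (by nlinarith)
    have h1 : 0 ≤ Real.exp (-s) / s := by positivity
    nlinarith
  rw [integral_eq_lintegral_of_nonneg_ae
    ((ae_restrict_iff' measurableSet_Ioi).mpr (Filter.Eventually.of_forall hnn))
    hmeas.aestronglyMeasurable.restrict]
  have key : (∫⁻ s in Ioi (0:ℝ), ENNReal.ofReal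
      (Real.exp (-s) / s * (1 - Real.exp (-(s*x)))))
      = ENNReal.ofReal (Real.log (1+x)) := by
    calc ∫⁻ s in Ioi (0:ℝ), ENNReal.ofReal
          (Real.exp (-s) / s * (1 - Real.exp (-(s*x))))
        = ∫⁻ s in Ioi (0:ℝ), ∫⁻ t in Ioc (1:ℝ) (1+x),
            ENNReal.ofReal (Real.exp (-(s*t))) := by
          refine setLIntegral_congr_fun measurableSet_Ioi
            (fun s hs => ?_)
          rw [h_closed s hs, ofReal_integral_eq_lintegral_ofReal
            ((by fun_prop : Continuous fun t : ℝ => Real.exp (-(s*t))).integrableOn_Ioc)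
            (Filter.Eventually.of_forall (fun t => (Real.exp_pos _).le))]
      _ = ∫⁻ t in Ioc (1:ℝ) (1+x), ∫⁻ s in Ioi (0:ℝ),
            ENNReal.ofReal (Real.exp (-(s*t))) := by
          exact lintegral_lintegral_swap
            ((Measurable.ennreal_ofReal (by fun_prop :
              Measurable fun p : ℝ × ℝ => Real.exp (-(p.1*p.2)))).aemeasurable)
      _ = ∫⁻ t in Ioc (1:ℝ) (1+x), ENNReal.ofReal (1/t) := by
          refine setLIntegral_congr_fun measurableSet_Ioc
            (fun t ht => ?_)
          have ht0 : (0:ℝ) < t := lt_of_lt_of_le one_pos ht.1.le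
          rw [← ofReal_integral_eq_lintegral_ofReal
            (by simpa [neg_mul, mul_comm, IntegrableOn] using exp_neg_integrableOn_Ioi 0 ht0)
            (Filter.Eventually.of_forall (fun s => (Real.exp_pos _).le)),
            aux_exp_int ht0]
      _ = ENNReal.ofReal (Real.log (1+x)) := by
          have hint : IntegrableOn (fun t : ℝ => 1/t) (Ioc 1 (1+x)) := by
            refine IntegrableOn.mono_set ?_ Ioc_subset_Icc_self
            refine ContinuousOn.integrableOn_compact isCompact_Icc ?_
            intro t ht
            exact (continuousAt_const.div continuousAt_id
              (ne_of_gt (lt_of_lt_of_le one_pos ht.1))).continuousWithinAt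
          rw [← ofReal_integral_eq_lintegral_ofReal hint
            ((ae_restrict_iff' measurableSet_Ioc).mpr (Filter.Eventually.of_forall
              (fun t ht => by
                have : (0:ℝ) < t := lt_of_lt_of_le one_pos ht.1.le
                positivity)))]
          rw [← intervalIntegral.integral_of_le hx1, integral_one_div (by
            intro h; rw [Set.uIcc_of_le hx1] at h
            exact absurd h.1 (by norm_num)), div_one]
  rw [key, ENNReal.toReal_ofReal (Real.log_nonneg (by linarith))]

lemma aux_integrable {x : ℝ} (hx : 0 ≤ x) :
    IntegrableOn (fun s : ℝ => Real.exp (-s) / s * (1 - Real.exp (-(s*x))))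
      (Ioi (0:ℝ)) := by
  have hdom : Integrable (fun s : ℝ => x * Real.exp (-s))
      (volume.restrict (Ioi (0:ℝ))) := by
    have := (exp_neg_integrableOn_Ioi 0 (zero_lt_one)).const_mul x
    simpa [neg_one_mul] using this
  refine hdom.mono' ((by fun_prop : Measurable fun s : ℝ =>
    Real.exp (-s) / s * (1 - Real.exp (-(s*x)))).aestronglyMeasurable.restrict) ?_
  refine (ae_restrict_iff' measurableSet_Ioi).mpr
    (Filter.Eventually.of_forall (fun s hs => ?_))
  have hs' : (0:ℝ) < s := hs
  have h2 : Real.exp (-(s*x)) ≤ 1 := Real.exp_le_one_iff.mpr (by nlinarith)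
  have h3 : 1 - Real.exp (-(s*x)) ≤ s * x := by
    have := Real.add_one_le_exp (-(s*x)); linarith
  have h4 : 0 ≤ Real.exp (-s) / s * (1 - Real.exp (-(s*x))) := by
    have h1 : 0 ≤ Real.exp (-s) / s := by positivity
    nlinarith
  rw [Real.norm_eq_abs, abs_of_nonneg h4]
  have : Real.exp (-s) / s * (1 - Real.exp (-(s*x)))
      ≤ Real.exp (-s) / s * (s * x) := by
    apply mul_le_mul_of_nonneg_left h3 (by positivity)
  calc Real.exp (-s) / s * (1 - Real.exp (-(s*x)))
      ≤ Real.exp (-s) / s * (s * x) := this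
    _ = x * Real.exp (-s) := by field_simp

lemma aux_nn {x : ℝ} (hx : 0 ≤ x) :
    ∀ s ∈ Ioi (0:ℝ), 0 ≤ Real.exp (-s) / s * (1 - Real.exp (-(s*x))) := by
  intro s hs
  have hs' : (0:ℝ) < s := hs
  have h2 : Real.exp (-(s*x)) ≤ 1 := Real.exp_le_one_iff.mpr (by nlinarith)
  have h1 : 0 ≤ Real.exp (-s) / s := by positivity
  nlinarith


/-- Hamdi's lemma: for a nonnegative random variable `X`,
`E[ln(1+X)] = ∫_0^∞ (e^{-s}/s) (1 - E[e^{-sX}]) ds`. -/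
theorem hamdi_log_identity
    {Ω : Type*} [MeasurableSpace Ω] (μ : Measure Ω) [IsProbabilityMeasure μ]
    (X : Ω → ℝ) (hX : Measurable X) (hX0 : ∀ ω, 0 ≤ X ω)
    (hInt : Integrable (fun ω => Real.log (1 + X ω)) μ) :
    (∫ ω, Real.log (1 + X ω) ∂μ) =
      ∫ s in Set.Ioi (0 : ℝ),
        Real.exp (-s) / s * (1 - ∫ ω, Real.exp (-(s * X ω)) ∂μ) := by
  have hlog_nn : ∀ ω, 0 ≤ Real.log (1 + X ω) := fun ω =>
    Real.log_nonneg (by linarith [hX0 ω])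
  have hexp_int : ∀ s : ℝ, 0 < s → Integrable (fun ω => Real.exp (-(s * X ω))) μ := by
    intro s hs
    refine (integrable_const (1:ℝ)).mono'
      ((by fun_prop : Measurable fun ω => Real.exp (-(s * X ω))).aestronglyMeasurable) ?_
    refine Filter.Eventually.of_forall (fun ω => ?_)
    rw [Real.norm_eq_abs, abs_of_nonneg (Real.exp_pos _).le]
    exact Real.exp_le_one_iff.mpr (by nlinarith [hX0 ω])
  -- LHS as a lintegral
  rw [integral_eq_lintegral_of_nonneg_ae (Filter.Eventually.of_forall hlog_nn) hInt.1]
  -- RHS as a lintegral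
  have hRmeas : AEStronglyMeasurable
      (fun s : ℝ => Real.exp (-s) / s * (1 - ∫ ω, Real.exp (-(s * X ω)) ∂μ))
      (volume.restrict (Ioi (0:ℝ))) := by
    have h1 : StronglyMeasurable (fun s : ℝ => ∫ ω, Real.exp (-(s * X ω)) ∂μ) := by
      exact ((by fun_prop : Measurable fun p : ℝ × Ω =>
        Real.exp (-(p.1 * X p.2))).stronglyMeasurable).integral_prod_right'
    exact (((measurable_neg.exp.div measurable_id).stronglyMeasurable.mul
      (stronglyMeasurable_const.sub h1)).aestronglyMeasurable).restrict
  have hRnn : ∀ s ∈ Ioi (0:ℝ),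
      0 ≤ Real.exp (-s) / s * (1 - ∫ ω, Real.exp (-(s * X ω)) ∂μ) := by
    intro s hs
    have hs' : (0:ℝ) < s := hs
    have hle : (∫ ω, Real.exp (-(s * X ω)) ∂μ) ≤ 1 := by
      calc (∫ ω, Real.exp (-(s * X ω)) ∂μ) ≤ ∫ _, (1:ℝ) ∂μ := by
            refine integral_mono (hexp_int s hs') (integrable_const 1) (fun ω => ?_)
            exact Real.exp_le_one_iff.mpr (by nlinarith [hX0 ω])
        _ = 1 := by simp
    have h1 : 0 ≤ Real.exp (-s) / s := by positivity
    nlinarith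
  rw [integral_eq_lintegral_of_nonneg_ae
    ((ae_restrict_iff' measurableSet_Ioi).mpr (Filter.Eventually.of_forall hRnn)) hRmeas]
  congr 1
  -- now prove equality of the two lintegrals
  calc ∫⁻ ω, ENNReal.ofReal (Real.log (1 + X ω)) ∂μ
      = ∫⁻ ω, (∫⁻ s in Ioi (0:ℝ),
          ENNReal.ofReal (Real.exp (-s) / s * (1 - Real.exp (-(s * X ω))))) ∂μ := by
        refine lintegral_congr (fun ω => ?_)
        rw [← aux_frullani (hX0 ω), ofReal_integral_eq_lintegral_ofReal
          (aux_integrable (hX0 ω))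
          ((ae_restrict_iff' measurableSet_Ioi).mpr (Filter.Eventually.of_forall
            (aux_nn (hX0 ω))))]
    _ = ∫⁻ s in Ioi (0:ℝ), (∫⁻ ω,
          ENNReal.ofReal (Real.exp (-s) / s * (1 - Real.exp (-(s * X ω)))) ∂μ) := by
        exact lintegral_lintegral_swap
          ((Measurable.ennreal_ofReal (by fun_prop : Measurable fun p : Ω × ℝ =>
            Real.exp (-p.2) / p.2 * (1 - Real.exp (-(p.2 * X p.1))))).aemeasurable)
    _ = ∫⁻ s in Ioi (0:ℝ), ENNReal.ofReal
          (Real.exp (-s) / s * (1 - ∫ ω, Real.exp (-(s * X ω)) ∂μ)) := by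
        refine setLIntegral_congr_fun measurableSet_Ioi
          (fun s hs => ?_)
        have hs' : (0:ℝ) < s := hs
        have hint2 : Integrable
            (fun ω => Real.exp (-s) / s * (1 - Real.exp (-(s * X ω)))) μ :=
          (((integrable_const (1:ℝ)).sub (hexp_int s hs')).const_mul _)
        rw [← ofReal_integral_eq_lintegral_ofReal hint2
          (Filter.Eventually.of_forall (fun ω => aux_nn (hX0 ω) s hs))]
        congr 1
        rw [integral_const_mul, integral_sub (integrable_const 1) (hexp_int s hs')]
        simp
end
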